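/- Let p ∈ [1, 2) and choose ε > 1/2 with 1/(1/2 + ε) < p < 1/ε and 2εp > 1. Then for every r > 0, the double integral ∫_0^∞ ∫_{-∞}^∞ (ρ r)^{-p/2} (ρ r / (|ρ - r|² + ζ²))^{εp} ρ⁻¹ dζ dρ is bounded by C r^{1-p} for a constant C = C(p, ε). -/

import Mathlib

open Real MeasureTheory

open Set

/-- The modified Bessel function of the first kind of order 1,
`I₁(x) = ∑_{m=0}^∞ (1/(m!(m+1)!)) (x/2)^{2m+1}`. -/
noncomputable def besselI1 (x : ℝ) : ℝ :=
  ∑' m : ℕ, (1 / (Nat.factorial m * Nat.factorial (m + 1)) : ℝ) * (x / 2) ^ (2 * m + 1)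

lemma aux_K {s : ℝ} (hs : 1/2 < s) : Integrable fun t : ℝ => (1 + t^2) ^ (-s) := by
  have h := integrable_rpow_neg_one_add_norm_sq (E := ℝ) (μ := volume) (r := 2*s)
    (by simpa using by linarith : (Module.finrank ℝ ℝ : ℝ) < 2*s)
  have heq : ∀ x : ℝ, ((1:ℝ) + ‖x‖^2) ^ (-(2*s)/2) = (1 + x^2) ^ (-s) := by
    intro x
    rw [Real.norm_eq_abs, sq_abs]
    congr 1
    ring
  have hfe : (fun x : ℝ => ((1:ℝ) + ‖x‖^2) ^ (-(2*s)/2)) = fun t : ℝ => (1 + t^2) ^ (-s) :=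
    funext heq
  rwa [hfe] at h

lemma aux_D {s : ℝ} (c : ℝ) (hc : c ≠ 0) :
    ∫ ζ : ℝ, (c^2 + ζ^2) ^ (-s) = |c| ^ (1 - 2*s) * ∫ t : ℝ, (1 + t^2) ^ (-s) := by
  have hd : 0 < |c| := abs_pos.mpr hc
  have h := MeasureTheory.Measure.integral_comp_mul_left (fun ζ : ℝ => (c^2 + ζ^2) ^ (-s)) |c|
  have heq : ∀ x : ℝ, (c^2 + (|c| * x)^2) ^ (-s) = |c| ^ (-(2*s)) * (1 + x^2) ^ (-s) := by
    intro x
    have : c^2 + (|c| * x)^2 = c^2 * (1 + x^2) := by rw [mul_pow, sq_abs]; ring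
    rw [this, Real.mul_rpow (by positivity) (by positivity), ← sq_abs c,
      ← Real.rpow_natCast |c| 2, ← Real.rpow_mul (abs_nonneg c)]
    norm_num
  simp only [heq] at h
  rw [MeasureTheory.integral_const_mul] at h
  have h2 : ∫ ζ : ℝ, (c^2 + ζ^2) ^ (-s) = |c| * (|c| ^ (-(2*s)) * ∫ t : ℝ, (1 + t^2) ^ (-s)) := by
    rw [h]
    rw [abs_inv, abs_abs, smul_eq_mul]
    field_simp
  rw [h2, ← mul_assoc]
  congr 1
  rw [show (1 - 2*s) = 1 + -(2*s) by ring, Real.rpow_add hd, Real.rpow_one]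

lemma aux_hfun {a t : ℝ} (ha : -1 < a) (ht1 : -1 < t) (ht0 : t < 0) (htail : a + t < -1) :
    IntegrableOn (fun u : ℝ => u ^ a * |u - 1| ^ t) (Set.Ioi 0) := by
  have hmeas : Measurable (fun u : ℝ => u ^ a * |u - 1| ^ t) := by fun_prop
  have hI1 : IntegrableOn (fun u : ℝ => u ^ a) (Ioc 0 2) :=
    (intervalIntegral.intervalIntegrable_rpow' (a := 0) (b := 2) ha).1
  have habs01 : IntervalIntegrable (fun v : ℝ => |v| ^ t) volume 0 1 := by
    refine (intervalIntegral.intervalIntegrable_rpow' (a := 0) (b := 1) ht1).congr ?_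
    rw [uIoc_of_le (by norm_num : (0:ℝ) ≤ 1)]
    intro v hv
    show v ^ t = |v| ^ t
    rw [abs_of_pos hv.1]
  have habs : IntervalIntegrable (fun v : ℝ => |v| ^ t) volume (-1) 1 := by
    have hneg : IntervalIntegrable (fun v : ℝ => |v| ^ t) volume (-1) 0 := by
      have h := (IntervalIntegrable.iff_comp_neg (f := fun v : ℝ => |v| ^ t)).mp habs01
      simp only [abs_neg, neg_zero, neg_neg] at h
      exact h.symm
    exact hneg.trans habs01
  have hI2 : IntegrableOn (fun u : ℝ => |u - 1| ^ t) (Ioc 0 2) := by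
    have h := habs.comp_sub_right 1
    norm_num at h
    exact (intervalIntegrable_iff_integrableOn_Ioc_of_le (by norm_num)).mp h
  have hIoc : IntegrableOn (fun u : ℝ => u ^ a * |u - 1| ^ t) (Ioc 0 2) := by
    refine Integrable.mono'
      ((hI1.const_mul ((2:ℝ) ^ (-t))).add (hI2.const_mul ((2:ℝ) ^ a + (2:ℝ) ^ (-a)))) 
      hmeas.aestronglyMeasurable ?_
    filter_upwards [ae_restrict_mem measurableSet_Ioc] with u hu
    obtain ⟨hu0, hu2⟩ := hu
    simp only [Pi.add_apply]
    rw [Real.norm_eq_abs]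
    have habs_nn : (0:ℝ) ≤ |u - 1| ^ t := rpow_nonneg (abs_nonneg _) _
    have hu_nn : (0:ℝ) ≤ u ^ a := rpow_nonneg hu0.le _
    rw [abs_of_nonneg (mul_nonneg hu_nn habs_nn)]
    rcases le_or_gt u (1/2) with hc | hc
    · have h1 : |u - 1| ^ t ≤ (2:ℝ) ^ (-t) := by
        have hh : (1:ℝ)/2 ≤ |u - 1| := by
          rw [abs_of_nonpos (by linarith)]
          linarith
        calc |u - 1| ^ t ≤ ((1:ℝ)/2) ^ t :=
              Real.rpow_le_rpow_of_nonpos (by norm_num) hh ht0.le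
          _ = (2:ℝ) ^ (-t) := by
              rw [show ((1:ℝ)/2) = 2⁻¹ by norm_num, ← Real.rpow_neg_one,
                ← Real.rpow_mul (by norm_num)]
              norm_num
      have : u ^ a * |u - 1| ^ t ≤ (2:ℝ) ^ (-t) * u ^ a := by
        rw [mul_comm ((2:ℝ) ^ (-t))]
        exact mul_le_mul_of_nonneg_left h1 hu_nn
      refine this.trans ?_
      have : (0:ℝ) ≤ ((2:ℝ) ^ a + (2:ℝ) ^ (-a)) * |u - 1| ^ t := by positivity
      linarith
    · have h1 : u ^ a ≤ (2:ℝ) ^ a + (2:ℝ) ^ (-a) := by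
        rcases le_or_gt 0 a with haa | haa
        · calc u ^ a ≤ (2:ℝ) ^ a := Real.rpow_le_rpow hu0.le hu2 haa
            _ ≤ _ := le_add_of_nonneg_right (by positivity)
        · calc u ^ a ≤ ((1:ℝ)/2) ^ a :=
              Real.rpow_le_rpow_of_nonpos (by norm_num) hc.le haa.le
            _ = (2:ℝ) ^ (-a) := by
              rw [show ((1:ℝ)/2) = 2⁻¹ by norm_num, ← Real.rpow_neg_one,
                ← Real.rpow_mul (by norm_num)]
              norm_num
            _ ≤ _ := le_add_of_nonneg_left (Real.rpow_nonneg (by norm_num) a)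
      have : u ^ a * |u - 1| ^ t ≤ ((2:ℝ) ^ a + (2:ℝ) ^ (-a)) * |u - 1| ^ t :=
        mul_le_mul_of_nonneg_right h1 habs_nn
      refine this.trans ?_
      have : (0:ℝ) ≤ (2:ℝ) ^ (-t) * u ^ a := by positivity
      linarith
  have hIoi2 : IntegrableOn (fun u : ℝ => u ^ a * |u - 1| ^ t) (Ioi 2) := by
    refine Integrable.mono'
      ((integrableOn_Ioi_rpow_of_lt htail (by norm_num : (0:ℝ) < 2)).const_mul ((2:ℝ) ^ (-t)))
      hmeas.aestronglyMeasurable ?_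
    filter_upwards [ae_restrict_mem measurableSet_Ioi] with u hu
    have hu0 : (0:ℝ) < u := by linarith [mem_Ioi.mp hu]
    have hu2 : (2:ℝ) < u := mem_Ioi.mp hu
    have hu1 : (0:ℝ) < u - 1 := by linarith
    have hu_nn : (0:ℝ) ≤ u ^ a := rpow_nonneg hu0.le _
    rw [Real.norm_eq_abs, abs_of_nonneg (mul_nonneg hu_nn (rpow_nonneg (abs_nonneg _) _)),
      abs_of_pos hu1]
    have h1 : (u - 1) ^ t ≤ (2:ℝ)^(-t) * u ^ t := by
      have hh : u / 2 ≤ u - 1 := by linarith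
      calc (u - 1) ^ t ≤ (u / 2) ^ t :=
            Real.rpow_le_rpow_of_nonpos (by linarith) hh ht0.le
        _ = (2:ℝ)^(-t) * u ^ t := by
            rw [div_eq_mul_inv, Real.mul_rpow hu0.le (by norm_num), ← Real.rpow_neg_one,
              ← Real.rpow_mul (by norm_num)]
            ring_nf
    calc u ^ a * (u - 1) ^ t ≤ u ^ a * ((2:ℝ)^(-t) * u ^ t) :=
          mul_le_mul_of_nonneg_left h1 hu_nn
      _ = (2:ℝ)^(-t) * u ^ (a + t) := by rw [Real.rpow_add hu0]; ring
  have hsplit : (Ioi (0:ℝ)) = Ioc 0 2 ∪ Ioi 2 := (Ioc_union_Ioi_eq_Ioi (by norm_num)).symm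
  rw [hsplit]
  exact hIoc.union hIoi2



theorem stmt16 (p ε : ℝ) (hp1 : 1 ≤ p) (hp2 : p < 2) (hε : 1 / 2 < ε)
    (h1 : 1 / (1 / 2 + ε) < p) (h2 : p < 1 / ε) (h3 : 1 < 2 * ε * p) :
    ∃ C : ℝ, 0 < C ∧ ∀ r : ℝ, 0 < r →
      ∫ ρ in Set.Ioi (0 : ℝ), ∫ ζ : ℝ,
          (ρ * r) ^ (-p / 2) * (ρ * r / ((ρ - r) ^ 2 + ζ ^ 2)) ^ (ε * p) * ρ⁻¹
        ≤ C * r ^ (1 - p) := by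
  have hp0 : (0:ℝ) < p := lt_of_lt_of_le one_pos hp1
  have hε0 : (0:ℝ) < ε := by linarith
  have hs : 1/2 < ε * p := by nlinarith
  have hsp1 : ε * p < 1 := by
    have := (lt_div_iff₀ hε0).mp h2; nlinarith
  have hb : 0 < ε * p - p / 2 := by nlinarith
  have h1' : 1 < p * (1/2 + ε) := by
    rw [div_lt_iff₀ (by linarith)] at h1; linarith
  have ht1 : (-1:ℝ) < 1 - 2*(ε*p) := by nlinarith
  have ht0 : 1 - 2*(ε*p) < 0 := by nlinarith
  have htail : (ε*p - p/2 - 1) + (1 - 2*(ε*p)) < -1 := by nlinarith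
  have hK := aux_K hs
  have hK0 : 0 ≤ ∫ t : ℝ, (1 + t^2) ^ (-(ε*p)) :=
    integral_nonneg fun t => Real.rpow_nonneg (by positivity) _
  set K := ∫ t : ℝ, (1 + t^2) ^ (-(ε*p)) with hK_def
  have hJint := aux_hfun (by linarith : (-1:ℝ) < ε*p - p/2 - 1) ht1 ht0 htail
  have hJ0 : 0 ≤ ∫ u in Ioi (0:ℝ), u ^ (ε*p - p/2 - 1) * |u - 1| ^ (1 - 2*(ε*p)) :=
    setIntegral_nonneg measurableSet_Ioi fun u hu =>
      mul_nonneg (Real.rpow_nonneg (le_of_lt hu) _) (Real.rpow_nonneg (abs_nonneg _) _)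
  set J := ∫ u in Ioi (0:ℝ), u ^ (ε*p - p/2 - 1) * |u - 1| ^ (1 - 2*(ε*p)) with hJ_def
  refine ⟨K * J + 1, by positivity, fun r hr => ?_⟩
  have hinner : ∀ ρ : ℝ, 0 < ρ → ρ ≠ r →
      (∫ ζ : ℝ, (ρ * r) ^ (-p / 2) * (ρ * r / ((ρ - r) ^ 2 + ζ ^ 2)) ^ (ε * p) * ρ⁻¹)
        = (K * r ^ (ε*p - p/2)) * (ρ ^ (ε*p - p/2 - 1) * |ρ - r| ^ (1 - 2*(ε*p))) := by
    intro ρ hρ hne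
    have hρr : 0 < ρ * r := mul_pos hρ hr
    have step1 : (∫ ζ : ℝ, (ρ * r) ^ (-p / 2) * (ρ * r / ((ρ - r) ^ 2 + ζ ^ 2)) ^ (ε * p) * ρ⁻¹)
        = ∫ ζ : ℝ, ((ρ*r) ^ (-p/2) * (ρ*r) ^ (ε*p) * ρ⁻¹) * ((ρ - r)^2 + ζ^2) ^ (-(ε*p)) := by
      congr 1
      funext ζ
      rw [Real.div_rpow hρr.le (by positivity),
        Real.rpow_neg (by positivity : (0:ℝ) ≤ (ρ - r)^2 + ζ^2)]
      ring
    rw [step1, MeasureTheory.integral_const_mul, aux_D (ρ - r) (sub_ne_zero.mpr hne)]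
    have e1 : (ρ*r) ^ (-p/2) * (ρ*r) ^ (ε*p) = (ρ*r) ^ (ε*p - p/2) := by
      rw [← Real.rpow_add hρr]; congr 1; try ring
    have e2 : (ρ*r) ^ (ε*p - p/2) = ρ ^ (ε*p - p/2) * r ^ (ε*p - p/2) :=
      Real.mul_rpow hρ.le hr.le
    have e3 : ρ ^ (ε*p - p/2 - 1) = ρ ^ (ε*p - p/2) * ρ⁻¹ := by
      rw [← Real.rpow_neg_one ρ, ← Real.rpow_add hρ]; congr 1; try ring
    rw [mul_assoc, e1, e2, e3]
    ring
  set g : ℝ → ℝ :=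
    fun ρ => (K * r ^ (ε*p - p/2)) * (ρ ^ (ε*p - p/2 - 1) * |ρ - r| ^ (1 - 2*(ε*p)))
    with hg_def
  have hscale : ∀ ρ : ℝ, 0 < ρ →
      ρ ^ (ε*p - p/2 - 1) * |ρ - r| ^ (1 - 2*(ε*p))
        = (r ^ (ε*p - p/2 - 1) * r ^ (1 - 2*(ε*p))) *
          ((r⁻¹*ρ) ^ (ε*p - p/2 - 1) * |r⁻¹*ρ - 1| ^ (1 - 2*(ε*p))) := by
    intro ρ hρ
    have e1 : (r⁻¹*ρ) ^ (ε*p - p/2 - 1) = (r ^ (ε*p - p/2 - 1))⁻¹ * ρ ^ (ε*p - p/2 - 1) := by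
      rw [Real.mul_rpow (inv_nonneg.mpr hr.le) hρ.le, Real.inv_rpow hr.le]
    have e2 : |r⁻¹*ρ - 1| ^ (1 - 2*(ε*p)) = (r ^ (1 - 2*(ε*p)))⁻¹ * |ρ - r| ^ (1 - 2*(ε*p)) := by
      have hh : r⁻¹*ρ - 1 = r⁻¹ * (ρ - r) := by field_simp
      rw [hh, abs_mul, abs_of_pos (inv_pos.mpr hr),
        Real.mul_rpow (inv_nonneg.mpr hr.le) (abs_nonneg _), Real.inv_rpow hr.le]
    rw [e1, e2]
    have hrb : r ^ (ε*p - p/2 - 1) ≠ 0 := (Real.rpow_pos_of_pos hr _).ne'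
    have hrt : r ^ (1 - 2*(ε*p)) ≠ 0 := (Real.rpow_pos_of_pos hr _).ne'
    field_simp
    try ring
  have hcomp : IntegrableOn
      (fun ρ : ℝ => (r⁻¹*ρ) ^ (ε*p - p/2 - 1) * |r⁻¹*ρ - 1| ^ (1 - 2*(ε*p))) (Ioi 0) := by
    have h := (integrableOn_Ioi_comp_mul_left_iff
      (fun u : ℝ => u ^ (ε*p - p/2 - 1) * |u - 1| ^ (1 - 2*(ε*p))) 0
      (inv_pos.mpr hr)).mpr (by simpa using hJint)
    simpa using h
  have hgint : IntegrableOn g (Ioi 0) := by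
    refine IntegrableOn.congr_fun (hcomp.const_mul
      ((K * r ^ (ε*p - p/2)) * (r ^ (ε*p - p/2 - 1) * r ^ (1 - 2*(ε*p)))))
      (fun ρ hρ => ?_) measurableSet_Ioi
    rw [hg_def]
    dsimp only
    rw [hscale ρ hρ]
    ring
  have hpow : r ^ (ε*p - p/2) * (r ^ (ε*p - p/2 - 1) * r ^ (1 - 2*(ε*p))) * r = r ^ (1 - p) := by
    nth_rewrite 4 [← Real.rpow_one r]
    rw [← Real.rpow_add hr, ← Real.rpow_add hr, ← Real.rpow_add hr]
    congr 1
    ring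
  have hgval : ∫ ρ in Ioi (0:ℝ), g ρ = (K * J) * r ^ (1 - p) := by
    calc ∫ ρ in Ioi (0:ℝ), g ρ
        = ∫ ρ in Ioi (0:ℝ), ((K * r ^ (ε*p - p/2)) * (r ^ (ε*p - p/2 - 1) * r ^ (1 - 2*(ε*p)))) *
            ((r⁻¹*ρ) ^ (ε*p - p/2 - 1) * |r⁻¹*ρ - 1| ^ (1 - 2*(ε*p))) := by
          refine setIntegral_congr_fun measurableSet_Ioi fun ρ hρ => ?_
          rw [hg_def]
          dsimp only
          rw [hscale ρ hρ]
          ring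
      _ = ((K * r ^ (ε*p - p/2)) * (r ^ (ε*p - p/2 - 1) * r ^ (1 - 2*(ε*p)))) *
            ∫ ρ in Ioi (0:ℝ), ((r⁻¹*ρ) ^ (ε*p - p/2 - 1) * |r⁻¹*ρ - 1| ^ (1 - 2*(ε*p))) :=
          MeasureTheory.integral_const_mul _ _
      _ = ((K * r ^ (ε*p - p/2)) * (r ^ (ε*p - p/2 - 1) * r ^ (1 - 2*(ε*p)))) * (r * J) := by
          rw [integral_comp_mul_left_Ioi
            (fun u : ℝ => u ^ (ε*p - p/2 - 1) * |u - 1| ^ (1 - 2*(ε*p))) 0 (inv_pos.mpr hr)]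
          simp [hJ_def]
      _ = (K * J) * r ^ (1 - p) := by rw [← hpow]; ring
  have hnonneg : 0 ≤ᵐ[volume.restrict (Ioi (0:ℝ))] fun ρ =>
      ∫ ζ : ℝ, (ρ * r) ^ (-p / 2) * (ρ * r / ((ρ - r) ^ 2 + ζ ^ 2)) ^ (ε * p) * ρ⁻¹ := by
    filter_upwards [ae_restrict_mem measurableSet_Ioi] with ρ hρ
    have hρ0 : (0:ℝ) < ρ := hρ
    exact integral_nonneg fun ζ => by positivity
  have hae : ∀ᵐ ρ : ℝ ∂(volume.restrict (Ioi (0:ℝ))), ρ ≠ r := by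
    refine ae_restrict_of_ae ?_
    simpa using (Set.countable_singleton r).ae_notMem (μ := volume)
  have hle : (fun ρ => ∫ ζ : ℝ, (ρ * r) ^ (-p / 2) *
        (ρ * r / ((ρ - r) ^ 2 + ζ ^ 2)) ^ (ε * p) * ρ⁻¹)
      ≤ᵐ[volume.restrict (Ioi (0:ℝ))] g := by
    filter_upwards [ae_restrict_mem measurableSet_Ioi, hae] with ρ hρ hne
    exact le_of_eq (hinner ρ hρ hne)
  calc ∫ ρ in Set.Ioi (0 : ℝ), ∫ ζ : ℝ,
          (ρ * r) ^ (-p / 2) * (ρ * r / ((ρ - r) ^ 2 + ζ ^ 2)) ^ (ε * p) * ρ⁻¹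
      ≤ ∫ ρ in Ioi (0:ℝ), g ρ := integral_mono_of_nonneg hnonneg hgint hle
    _ = (K * J) * r ^ (1 - p) := hgval
    _ ≤ (K * J + 1) * r ^ (1 - p) :=
        mul_le_mul_of_nonneg_right (by linarith) (Real.rpow_nonneg hr.le _)
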